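/- With Ψ_m, Λ_m ∈ NSym as above (Ψ defined by dσ(t)/dt = σ(t)ψ(t), σ(t)λ(-t)=1), for each m ≥ 1 one has Λ_m = (-1)^m ∑_{I ∈ C_m} ((-1)^{ℓ(I)}/π_u(Ī)) Ψ^I, where Ī is the mirror image (reversal) of I and π_u(I) = ∏_j (i_1 + ... + i_j). -/

import Mathlib

/-- `NSym`, the free associative `ℚ`-algebra on noncommuting generators `Λ_1, Λ_2, ...`. -/
noncomputable abbrev NSym : Type := FreeAlgebra ℚ ℕ

/-- The elementary noncommutative symmetric functions: `Λ_0 = 1` and `Λ_m` is the `m`-th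
generator for `m ≥ 1`. -/
noncomputable def Lam : ℕ → NSym := fun m => if m = 0 then 1 else FreeAlgebra.ι ℚ m

/-- `π_u(I) = ∏_{j=1}^{k} (i_1 + ... + i_j)` for a composition `I = (i_1,...,i_k)`,
given by its list of parts. -/
def piu (l : List ℕ) : ℕ :=
  ((List.range l.length).map fun j => (l.take (j + 1)).sum).prod

open PowerSeries Finset

/-- Formal derivative on power series over a (possibly noncommutative) ring. -/
noncomputable def Dser (f : PowerSeries NSym) : PowerSeries NSym :=
  PowerSeries.mk fun k => (k + 1 : ℕ) • PowerSeries.coeff (R := NSym) (k + 1) f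

lemma Dser_one : Dser 1 = 0 := by
  ext k
  simp [Dser, PowerSeries.coeff_one]

lemma Dser_mul (f g : PowerSeries NSym) :
    Dser (f * g) = Dser f * g + f * Dser g := by
  ext k
  simp only [Dser, map_add, PowerSeries.coeff_mk, PowerSeries.coeff_mul,
    Finset.Nat.sum_antidiagonal_eq_sum_range_succ_mk, PowerSeries.coeff_mk]
  rw [Finset.smul_sum]
  have h1 : ∑ i ∈ Finset.range (k + 1),
      ((i + 1 : ℕ) • PowerSeries.coeff (R := NSym) (i + 1) f) * PowerSeries.coeff (R := NSym) (k - i) g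
      = ∑ i ∈ Finset.range (k + 1 + 1),
        (i : ℕ) • (PowerSeries.coeff (R := NSym) i f * PowerSeries.coeff (R := NSym) (k + 1 - i) g) := by
    conv_rhs => rw [Finset.sum_range_succ']
    simp only [zero_smul, add_zero, Nat.succ_sub_succ]
    refine Finset.sum_congr rfl fun i hi => ?_
    rw [smul_mul_assoc]
  have h2 : ∑ i ∈ Finset.range (k + 1),
      PowerSeries.coeff (R := NSym) i f * ((k - i + 1 : ℕ) • PowerSeries.coeff (R := NSym) (k - i + 1) g)
      = ∑ i ∈ Finset.range (k + 1 + 1),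
        (k + 1 - i : ℕ) • (PowerSeries.coeff (R := NSym) i f * PowerSeries.coeff (R := NSym) (k + 1 - i) g) := by
    conv_rhs => rw [Finset.sum_range_succ]
    simp only [Nat.sub_self, zero_smul, add_zero]
    refine Finset.sum_congr rfl fun i hi => ?_
    have hi' : i ≤ k := Nat.lt_succ_iff.mp (Finset.mem_range.mp hi)
    rw [mul_smul_comm, show k - i + 1 = k + 1 - i from by omega]
  rw [h1, h2, ← Finset.sum_add_distrib]
  refine Finset.sum_congr rfl fun i hi => ?_
  have hi' : i < k + 2 := Finset.mem_range.mp hi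
  rw [← add_nsmul, show i + (k + 1 - i) = k + 1 by omega]

/-- Right inverse coefficients for a power series with constant term 1. -/
noncomputable def invAux (f : ℕ → NSym) : ℕ → NSym
  | 0 => 1
  | (n + 1) => -∑ i ∈ Finset.range (n + 1), f (i + 1) * invAux f (n - i)
  decreasing_by exact Nat.lt_succ_of_le (Nat.sub_le n i)

lemma mk_mul_invAux (f : ℕ → NSym) (hf : f 0 = 1) :
    PowerSeries.mk f * PowerSeries.mk (invAux f) = 1 := by
  ext n
  cases n with
  | zero =>
      simp [PowerSeries.coeff_mul, hf, invAux]
  | succ n =>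
      rw [PowerSeries.coeff_mul, Finset.Nat.sum_antidiagonal_eq_sum_range_succ_mk]
      simp only [PowerSeries.coeff_mk]
      rw [Finset.sum_range_succ']
      have h0 : f 0 * invAux f (n + 1 - 0) = invAux f (n + 1) := by
        rw [hf, one_mul, Nat.sub_zero]
      have h1 : ∑ i ∈ Finset.range (n + 1), f (i + 1) * invAux f (n + 1 - (i + 1))
          = ∑ i ∈ Finset.range (n + 1), f (i + 1) * invAux f (n - i) := by
        refine Finset.sum_congr rfl fun i hi => ?_
        rw [Nat.succ_sub_succ]
      rw [h0, h1, show invAux f (n + 1) = -∑ i ∈ Finset.range (n + 1), f (i + 1) * invAux f (n - i) from by rw [invAux]]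
      simp [PowerSeries.coeff_one]

lemma piu_append (l : List ℕ) (a : ℕ) : piu (l ++ [a]) = piu l * (l.sum + a) := by
  unfold piu
  rw [show (l ++ [a]).length = l.length + 1 from by simp, List.range_succ, List.map_append,
    List.prod_append]
  congr 1
  · congr 1
    refine List.map_congr_left fun j hj => ?_
    rw [List.mem_range] at hj
    rw [List.take_append_of_le_length (by omega)]
  · simp [List.take_of_length_le (by simp : (l ++ [a]).length ≤ l.length + 1)]

/-- Prepending a block to a composition. -/
def consC (k : ℕ) (i : Fin (k + 1)) (I : Composition (k - i)) : Composition (k + 1) :=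
  ⟨(i + 1) :: I.blocks,
   by intro j hj
      rcases List.mem_cons.1 hj with h | h
      · omega
      · exact I.blocks_pos h,
   by have h1 := I.blocks_sum
      have h2 := i.2
      simp only [List.sum_cons, h1]
      omega⟩

lemma consC_bijective (k : ℕ) :
    Function.Bijective (fun x : Σ i : Fin (k + 1), Composition (k - i) => consC k x.1 x.2) := by
  constructor
  · rintro ⟨i, I⟩ ⟨i', I'⟩ h
    have hb : ((i : ℕ) + 1) :: I.blocks = ((i' : ℕ) + 1) :: I'.blocks :=
      congrArg Composition.blocks h
    have hi : (i : ℕ) + 1 = (i' : ℕ) + 1 := by injection hb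
    have hI : I.blocks = I'.blocks := by injection hb
    have hii : i = i' := Fin.ext (by omega)
    subst hii
    have : I = I' := Composition.ext hI
    subst this
    rfl
  · intro J
    have hne : J.blocks ≠ [] := by
      intro h
      have hs := J.blocks_sum
      rw [h] at hs
      simp at hs
    set b := J.blocks.head hne with hbdef
    have hb1 : 1 ≤ b := J.one_le_blocks (List.head_mem hne)
    have hcons : b :: J.blocks.tail = J.blocks := List.cons_head_tail hne
    have hsum : b + J.blocks.tail.sum = k + 1 := by
      have hs := J.blocks_sum
      rw [← hcons, List.sum_cons] at hs
      exact hs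
    have hble : b ≤ k + 1 := by omega
    refine ⟨⟨⟨b - 1, by omega⟩, ⟨J.blocks.tail, ?_, ?_⟩⟩, ?_⟩
    · intro j hj
      exact J.blocks_pos (List.mem_of_mem_tail hj)
    · simp only
      omega
    · apply Composition.ext
      show (b - 1 + 1) :: J.blocks.tail = J.blocks
      rw [show b - 1 + 1 = b from by omega, hcons]

lemma piu_pos {l : List ℕ} (hl : ∀ x ∈ l, 0 < x) : 0 < piu l := by
  unfold piu
  apply List.prod_pos
  intro a ha
  rw [List.mem_map] at ha
  obtain ⟨j, hj, rfl⟩ := ha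
  rw [List.mem_range] at hj
  have hne : l.take (j + 1) ≠ [] := by
    intro h
    have h2 : (l.take (j + 1)).length = 0 := by rw [h]; rfl
    rw [List.length_take] at h2
    omega
  obtain ⟨b, t, hbt⟩ := List.exists_cons_of_ne_nil hne
  rw [hbt, List.sum_cons]
  have hb : 0 < b := hl b (List.take_subset _ _ (hbt ▸ (List.mem_cons_self : b ∈ b :: t)))
  omega

lemma comp_zero_eq (I : Composition 0) : I = ⟨[], by simp, rfl⟩ := by
  apply Composition.ext
  have hs := I.blocks_sum
  cases hb : I.blocks with
  | nil => rfl
  | cons a t =>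
    have ha := I.blocks_pos (hb ▸ (List.mem_cons_self : a ∈ a :: t))
    rw [hb, List.sum_cons] at hs
    omega

lemma main_formula (Psi mu : ℕ → NSym) (h0 : mu 0 = 1)
    (hrec : ∀ k : ℕ, ((k : ℚ) + 1) • mu (k + 1)
      = -∑ i ∈ Finset.range (k + 1), Psi (i + 1) * mu (k - i)) :
    ∀ m : ℕ, mu m = ∑ I : Composition m,
      (((-1 : ℚ) ^ I.length) * (piu I.blocks.reverse : ℚ)⁻¹) •
        (I.blocks.map Psi).prod := by
  intro m
  induction m using Nat.strong_induction_on with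
  | _ m IH =>
  match m with
  | 0 =>
    haveI : Unique (Composition 0) := ⟨⟨⟨[], by simp, rfl⟩⟩, fun I => comp_zero_eq I⟩
    have hone : ∀ I : Composition 0,
        (((-1 : ℚ) ^ I.length * (piu I.blocks.reverse : ℚ)⁻¹) •
          ((I.blocks.map Psi).prod : NSym)) = 1 := by
      intro I
      rw [comp_zero_eq I]
      norm_num [piu, Composition.length]
    rw [h0, Finset.sum_congr rfl fun I _ => hone I, Finset.sum_const, Finset.card_univ,
      Fintype.card_unique, one_smul]
  | (k + 1) =>
    have hk : ((k : ℚ) + 1) ≠ 0 := by positivity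
    refine smul_right_injective NSym hk ?_
    show ((k : ℚ) + 1) • mu (k + 1) = ((k : ℚ) + 1) • _
    rw [hrec k]
    have hsum := Fintype.sum_bijective _ (consC_bijective k)
      (fun x => (((-1 : ℚ) ^ (consC k x.1 x.2).length *
          (piu (consC k x.1 x.2).blocks.reverse : ℚ)⁻¹) •
            ((consC k x.1 x.2).blocks.map Psi).prod))
      (fun J => (((-1 : ℚ) ^ J.length * (piu J.blocks.reverse : ℚ)⁻¹) •
          (J.blocks.map Psi).prod))
      (fun x => rfl)
    rw [← hsum, ← Finset.univ_sigma_univ, Finset.sum_sigma, Finset.smul_sum,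
      Finset.sum_range, ← Finset.sum_neg_distrib]
    refine Finset.sum_congr rfl fun i _ => ?_
    rw [IH (k - (i : ℕ)) (Nat.lt_succ_of_le (Nat.sub_le _ _)), Finset.mul_sum,
      ← Finset.sum_neg_distrib, Finset.smul_sum]
    refine Finset.sum_congr rfl fun I _ => ?_
    have h2 : ((consC k i I).blocks.map Psi).prod
        = Psi ((i : ℕ) + 1) * (I.blocks.map Psi).prod := by
      simp [consC]
    have h3 : piu ((consC k i I).blocks.reverse) = piu I.blocks.reverse * (k + 1) := by
      show piu ((((i : ℕ) + 1) :: I.blocks).reverse) = _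
      rw [List.reverse_cons, piu_append]
      congr 1
      have hs : I.blocks.reverse.sum = k - (i : ℕ) := by
        rw [List.sum_reverse, I.blocks_sum]
      have h2 := i.2
      omega
    have h4 : (consC k i I).length = I.length + 1 := rfl
    have hpiu : ((piu I.blocks.reverse : ℚ)) ≠ 0 := by
      have := piu_pos (l := I.blocks.reverse) (fun x hx => I.blocks_pos (List.mem_reverse.mp hx))
      positivity
    rw [h2, h3, h4, mul_smul_comm, ← neg_smul, smul_smul]
    congr 1
    push_cast
    rw [mul_inv]
    field_simp
    ring

/-- with `σ(t) = ∑ t^m S_m` satisfying `σ(t)λ(-t) = 1` and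
`ψ(t) = ∑_{m≥1} t^{m-1} Ψ_m` defined by `dσ(t)/dt = σ(t)ψ(t)`, for each `m ≥ 1` one has
`Λ_m = (-1)^m ∑_{I ∈ C_m} ((-1)^{ℓ(I)}/π_u(Ī)) Ψ^I`, with `Ī` the reversal of `I`. -/
theorem stmt7 (S : ℕ → NSym) (Psi : ℕ → NSym)
    (hS : PowerSeries.mk S * (PowerSeries.mk fun n => (-1 : NSym) ^ n * Lam n) = 1)
    (hPsi : ∀ k : ℕ,
      ((k : ℚ) + 1) • PowerSeries.coeff (R := NSym) (k + 1) (PowerSeries.mk S)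
        = PowerSeries.coeff (R := NSym) k
            (PowerSeries.mk S * PowerSeries.mk fun j => Psi (j + 1))) :
    ∀ m : ℕ, 1 ≤ m →
      Lam m = (-1 : NSym) ^ m *
        ∑ I : Composition m,
          (((-1 : ℚ) ^ I.length) * (piu I.blocks.reverse : ℚ)⁻¹) •
            (I.blocks.map Psi).prod := by
  set mu : ℕ → NSym := fun n => (-1 : NSym) ^ n * Lam n with hmu
  have h0 : mu 0 = 1 := by simp [hmu, Lam]
  have hD : Dser (PowerSeries.mk S)
      = PowerSeries.mk S * PowerSeries.mk fun j => Psi (j + 1) := by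
    ext k
    simp only [Dser, PowerSeries.coeff_mk]
    rw [← Nat.cast_smul_eq_nsmul ℚ]
    push_cast
    have hP := hPsi k
    rw [PowerSeries.coeff_mk] at hP
    exact hP
  have hr : PowerSeries.mk mu * PowerSeries.mk (invAux mu) = 1 := mk_mul_invAux mu h0
  have hinv : PowerSeries.mk mu * PowerSeries.mk S = 1 := by
    calc PowerSeries.mk mu * PowerSeries.mk S
        = (PowerSeries.mk mu * PowerSeries.mk S) *
            (PowerSeries.mk mu * PowerSeries.mk (invAux mu)) := by rw [hr, mul_one]
      _ = PowerSeries.mk mu * ((PowerSeries.mk S * PowerSeries.mk mu) *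
            PowerSeries.mk (invAux mu)) := by
          simp only [mul_assoc]
      _ = PowerSeries.mk mu * PowerSeries.mk (invAux mu) := by rw [hS, one_mul]
      _ = 1 := hr
  have h1 : Dser (PowerSeries.mk S * PowerSeries.mk mu) = 0 := by rw [hS, Dser_one]
  rw [Dser_mul, hD] at h1
  have h2 : PowerSeries.mk S * ((PowerSeries.mk fun j => Psi (j + 1)) * PowerSeries.mk mu
      + Dser (PowerSeries.mk mu)) = 0 := by
    rw [mul_add, ← mul_assoc]
    exact h1
  have h3 : (PowerSeries.mk fun j => Psi (j + 1)) * PowerSeries.mk mu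
      + Dser (PowerSeries.mk mu) = 0 := by
    have h4 := congrArg (fun x => PowerSeries.mk mu * x) h2
    simpa [← mul_assoc, hinv] using h4
  have hDmu : Dser (PowerSeries.mk mu)
      = -((PowerSeries.mk fun j => Psi (j + 1)) * PowerSeries.mk mu) :=
    eq_neg_of_add_eq_zero_right h3
  have hrec : ∀ k : ℕ, ((k : ℚ) + 1) • mu (k + 1)
      = -∑ i ∈ Finset.range (k + 1), Psi (i + 1) * mu (k - i) := by
    intro k
    have h5 := congrArg (PowerSeries.coeff (R := NSym) k) hDmu
    simp only [Dser, PowerSeries.coeff_mk, map_neg, PowerSeries.coeff_mul,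
      Finset.Nat.sum_antidiagonal_eq_sum_range_succ_mk] at h5
    rw [show ((k : ℚ) + 1) = ((k + 1 : ℕ) : ℚ) from by push_cast; ring,
      Nat.cast_smul_eq_nsmul]
    exact h5
  have key := main_formula Psi mu h0 hrec
  intro m _
  rw [← key m]
  show Lam m = (-1 : NSym) ^ m * ((-1 : NSym) ^ m * Lam m)
  rw [← mul_assoc, ← pow_add, Even.neg_one_pow ⟨m, rfl⟩, one_mul]
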